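/- Let q be a prime power, F_q the finite field with q elements, and χ a nontrivial additive character of F_q with values in the complex numbers. Then Σ_{B ∈ GL_3(F_q)} χ(b_{11} + b_{22}) = q^4 - q^3, where b_{11}, b_{22} denote the (1,1) and (2,2) entries of B. -/

import Mathlib

open Finset

section aux

variable {F : Type*} [Field F] [Fintype F] [DecidableEq F]

private lemma auxSumChar (χ : AddChar F ℂ) (hχ : χ ≠ 1) : ∑ t : F, χ t = 0 :=
  AddChar.sum_eq_zero_iff_ne_zero.mpr (by rwa [← AddChar.one_eq_zero])

private lemma auxSumCharShift (χ : AddChar F ℂ) (hχ : χ ≠ 1) (c : F) :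
    ∑ t : F, χ (c + t) = 0 := by
  simp_rw [AddChar.map_add_eq_mul, ← Finset.mul_sum, auxSumChar χ hχ, mul_zero]

private lemma auxSumCoord (χ : AddChar F ℂ) (hχ : χ ≠ 1) (j : Fin 3) (c : F) :
    ∑ x : Fin 3 → F, χ (c + x j) = 0 := by
  refine (Fintype.sum_equiv (Equiv.funSplitAt j F) _
    (fun p => χ (c + p.1)) (fun x => rfl)).trans ?_
  rw [Fintype.sum_prod_type]
  simp only [Finset.sum_const]
  rw [← Finset.smul_sum, auxSumCharShift χ hχ, smul_zero]

private lemma auxSumLin (χ : AddChar F ℂ) (hχ : χ ≠ 1) (a : F) :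
    ∑ y : Fin 3 → F, χ (a * y 0 + y 1) = 0 := by
  refine (Fintype.sum_equiv (Equiv.funSplitAt (1 : Fin 3) F) _
    (fun p => χ (a * p.2 ⟨0, by decide⟩ + p.1)) (fun x => rfl)).trans ?_
  rw [Fintype.sum_prod_type, Finset.sum_comm]
  exact Finset.sum_eq_zero fun r _ => by simpa using auxSumCharShift χ hχ (a * r ⟨0, by decide⟩)

private noncomputable def glEquiv :
    GL (Fin 3) F ≃ {M : Matrix (Fin 3) (Fin 3) F // IsUnit M} where
  toFun B := ⟨(B : Matrix (Fin 3) (Fin 3) F), Units.isUnit B⟩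
  invFun M := M.2.unit
  left_inv B := Units.ext (Units.isUnit B).unit_spec
  right_inv M := Subtype.ext M.2.unit_spec

private def rowsEquiv : ((Fin 3 → F) × (Fin 3 → F) × (Fin 3 → F)) ≃ Matrix (Fin 3) (Fin 3) F where
  toFun p := Matrix.of ![p.1, p.2.1, p.2.2]
  invFun M := (M 0, M 1, M 2)
  left_inv p := rfl
  right_inv M := by
    ext i j
    fin_cases i <;> rfl

private lemma snoc3 (x y z : Fin 3 → F) : ![x, y, z] = Fin.snoc ![x, y] z := by
  funext i
  fin_cases i <;> simp [Fin.snoc] <;> rfl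

end aux

/-- For a nontrivial additive character `χ` of the finite field with `q` elements,
`∑_{B ∈ GL_3(F_q)} χ(b₁₁ + b₂₂) = q^4 - q^3`. -/
theorem charSum_GL3_rank_two (q : ℕ) (F : Type*) [Field F] [Fintype F] [DecidableEq F]
    (hq : Fintype.card F = q) (χ : AddChar F ℂ) (hχ : χ ≠ 1) :
    ∑ B : GL (Fin 3) F,
        χ ((B : Matrix (Fin 3) (Fin 3) F) 0 0 + (B : Matrix (Fin 3) (Fin 3) F) 1 1) =
      (q : ℂ) ^ 4 - (q : ℂ) ^ 3 := by
  classical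
  subst hq
  set Q := Fintype.card F with hQ
  have hQpos : 0 < Q := Fintype.card_pos
  have hle : Q ^ 2 ≤ Q ^ 3 := Nat.pow_le_pow_right hQpos (by norm_num)
  -- counting: the complement of the span of two independent vectors has `q^3 - q^2` elements
  have hcard : ∀ x y : Fin 3 → F, LinearIndependent F ![x, y] →
      ((univ.filter (fun z : Fin 3 → F =>
        z ∉ Submodule.span F (Set.range ![x, y]))).card : ℂ)
        = (Q : ℂ) ^ 3 - (Q : ℂ) ^ 2 := by
    intro x y h
    have h1 : Fintype.card {z : Fin 3 → F // z ∈ Submodule.span F (Set.range ![x, y])}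
        = Q ^ 2 := by
      rw [Module.card_eq_pow_finrank (K := F), finrank_span_eq_card h, Fintype.card_fin]
    have h2 : (univ.filter fun z : Fin 3 → F =>
        z ∈ Submodule.span F (Set.range ![x, y])).card = Q ^ 2 := by
      rw [← h1, Fintype.card_subtype]
    rw [Finset.filter_not, Finset.card_sdiff_of_subset (Finset.filter_subset _ _), h2, Finset.card_univ,
      Fintype.card_fun, Fintype.card_fin, Nat.cast_sub hle]
    push_cast
    ring
  -- step 1 : sum over GL = sum over matrices which are units
  have step1 : (∑ B : GL (Fin 3) F,
        χ ((B : Matrix (Fin 3) (Fin 3) F) 0 0 + (B : Matrix (Fin 3) (Fin 3) F) 1 1))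
      = ∑ M : Matrix (Fin 3) (Fin 3) F, if IsUnit M then χ (M 0 0 + M 1 1) else 0 := by
    refine (Fintype.sum_equiv (glEquiv (F := F)) _
      (fun M : {M : Matrix (Fin 3) (Fin 3) F // IsUnit M} => χ (M.1 0 0 + M.1 1 1))
      (fun B => rfl)).trans ?_
    rw [← Finset.sum_subtype (s := univ.filter fun M : Matrix (Fin 3) (Fin 3) F => IsUnit M)
      (by simp) (fun M => χ (M 0 0 + M 1 1)), Finset.sum_filter]
  -- step 2 : reindex by rows
  have step2 : (∑ M : Matrix (Fin 3) (Fin 3) F, if IsUnit M then χ (M 0 0 + M 1 1) else 0)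
      = ∑ x : Fin 3 → F, ∑ y : Fin 3 → F, ∑ z : Fin 3 → F,
          if LinearIndependent F ![x, y] ∧ z ∉ Submodule.span F (Set.range ![x, y])
          then χ (x 0 + y 1) else 0 := by
    rw [← Equiv.sum_comp (rowsEquiv (F := F))
      (fun M : Matrix (Fin 3) (Fin 3) F => if IsUnit M then χ (M 0 0 + M 1 1) else 0),
      Fintype.sum_prod_type]
    refine Finset.sum_congr rfl fun x _ => ?_
    rw [Fintype.sum_prod_type]
    refine Finset.sum_congr rfl fun y _ => ?_
    refine Finset.sum_congr rfl fun z _ => ?_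
    have hiff : IsUnit (rowsEquiv (F := F) (x, y, z)) ↔ (LinearIndependent F ![x, y] ∧
        z ∉ Submodule.span F (Set.range ![x, y])) := by
      rw [← Matrix.linearIndependent_rows_iff_isUnit]
      show LinearIndependent F ![x, y, z] ↔ _
      rw [snoc3, linearIndependent_fin_snoc]
    simp only [rowsEquiv, Equiv.coe_fn_mk, Matrix.of_apply, Matrix.cons_val',
      Matrix.cons_val_zero, Matrix.cons_val_one, Matrix.head_cons] at hiff ⊢
    exact if_congr hiff rfl rfl
  -- step 3 : do the inner sum over z
  have step3 : ∀ x y : Fin 3 → F, (∑ z : Fin 3 → F,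
      if LinearIndependent F ![x, y] ∧ z ∉ Submodule.span F (Set.range ![x, y])
      then χ (x 0 + y 1) else 0)
      = ((Q : ℂ) ^ 3 - (Q : ℂ) ^ 2) *
          (if LinearIndependent F ![x, y] then χ (x 0 + y 1) else 0) := by
    intro x y
    by_cases h : LinearIndependent F ![x, y]
    · simp only [h, true_and, if_true]
      rw [Finset.sum_ite, Finset.sum_const, Finset.sum_const_zero, add_zero, nsmul_eq_mul,
        hcard x y h]
    · simp [h]
  -- the pair sum
  have hcond : ∀ x y : Fin 3 → F,
      (¬ LinearIndependent F ![x, y]) ↔ (y = 0 ∨ ∃ a : F, a • y = x) := by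
    intro x y
    rw [linearIndependent_fin2]
    simp only [Matrix.cons_val_one, Matrix.head_cons, Matrix.cons_val_zero]
    constructor
    · intro h
      by_cases hy : y = 0
      · exact Or.inl hy
      · refine Or.inr ?_
        by_contra hc
        push_neg at hc
        exact h ⟨hy, fun a => hc a⟩
    · rintro (hy | ⟨a, ha⟩) ⟨h1, h2⟩
      · exact h1 hy
      · exact h2 a ha
  have hD : (∑ x : Fin 3 → F, ∑ y : Fin 3 → F,
      if ¬ LinearIndependent F ![x, y] then χ (x 0 + y 1) else 0) = -(Q : ℂ) := by
    simp only [hcond]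
    rw [Finset.sum_comm]
    rw [← Finset.add_sum_erase _ _ (Finset.mem_univ (0 : Fin 3 → F))]
    have hf0 : (∑ x : Fin 3 → F,
        if ((0 : Fin 3 → F) = 0 ∨ ∃ a : F, a • (0 : Fin 3 → F) = x)
        then χ (x 0 + (0 : Fin 3 → F) 1) else 0) = 0 := by
      simp only [eq_self_iff_true, true_or, if_true, Pi.zero_apply, add_zero]
      simpa using auxSumCoord χ hχ 0 0
    rw [hf0, zero_add]
    have hfy : ∀ y : Fin 3 → F, y ≠ 0 →
        (∑ x : Fin 3 → F, if (y = 0 ∨ ∃ a : F, a • y = x) then χ (x 0 + y 1) else 0)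
          = ∑ a : F, χ (a * y 0 + y 1) := by
      intro y hy
      simp only [hy, false_or]
      have himg : (univ.filter (fun x : Fin 3 → F => ∃ a : F, a • y = x))
          = univ.image (fun a : F => a • y) := by
        ext x
        simp [eq_comm]
      rw [← Finset.sum_filter, himg,
        Finset.sum_image (fun a _ b _ hab => smul_left_injective F hy hab)]
      simp [smul_eq_mul]
    rw [Finset.sum_congr rfl (fun y hyy => hfy y (Finset.mem_erase.mp hyy).1)]
    have hsumg : (∑ y : Fin 3 → F, ∑ a : F, χ (a * y 0 + y 1)) = 0 := by
      rw [Finset.sum_comm]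
      exact Finset.sum_eq_zero fun a _ => auxSumLin χ hχ a
    have hg0 : (∑ a : F, χ (a * (0 : Fin 3 → F) 0 + (0 : Fin 3 → F) 1)) = (Q : ℂ) := by
      simp [AddChar.map_zero_eq_one]
      exact hQ.symm
    have := Finset.add_sum_erase univ (fun y : Fin 3 → F => ∑ a : F, χ (a * y 0 + y 1))
      (Finset.mem_univ (0 : Fin 3 → F))
    rw [hsumg, hg0] at this
    linear_combination this
  have hS2 : (∑ x : Fin 3 → F, ∑ y : Fin 3 → F,
      if LinearIndependent F ![x, y] then χ (x 0 + y 1) else 0) = (Q : ℂ) := by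
    have hsplit : ∀ x y : Fin 3 → F,
        (if LinearIndependent F ![x, y] then χ (x 0 + y 1) else 0)
        = χ (x 0 + y 1) - (if ¬ LinearIndependent F ![x, y] then χ (x 0 + y 1) else 0) := by
      intro x y
      by_cases h : LinearIndependent F ![x, y] <;> simp [h]
    simp_rw [hsplit, Finset.sum_sub_distrib]
    have hT : (∑ x : Fin 3 → F, ∑ y : Fin 3 → F, χ (x 0 + y 1)) = 0 :=
      Finset.sum_eq_zero fun x _ => auxSumCoord χ hχ 1 (x 0)
    rw [hT, hD, zero_sub, neg_neg]
  rw [step1, step2]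
  simp_rw [step3, ← Finset.mul_sum]
  rw [hS2]
  ring
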